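/- In the setting of the previous construction (A a commutative ring, D an A-coalgebra, x an A-linear functional with 0 → A → D →∩x D → 0 exact, β₁ ∈ D with ε(β₁) = 1, β₁ ∩ x = 0, and βₙ ∈ D defined inductively with β_{n+1} ∩ x = βₙ and ε(βₙ) = 0 for n ≥ 2), assume additionally that for every d ∈ D there exists n ≥ 1 with d ∩ x^n = 0, where d ∩ x^n denotes the n-fold iterated cap product with x. Then the family (β₁, β₂, β₃, …) is a free A-module basis of D. -/

import Mathlib

open TensorProduct

/-- The cap product `d ∩ x = (1 ⊗ x)(Δ d)`, as a linear endomorphism of `D`. -/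
noncomputable def stmt12Cap {A D : Type*} [CommRing A] [AddCommGroup D] [Module A D]
    [Coalgebra A D] (x : D →ₗ[A] A) : D →ₗ[A] D :=
  (TensorProduct.rid A D).toLinearMap ∘ₗ (LinearMap.lTensor D x) ∘ₗ Coalgebra.comul

/-- Setting as in the previous statement: `D` a cocommutative counital `A`-coalgebra,
`x` a linear functional with `0 → A → D →(∩x) D → 0` exact, and the canonical family
`βₙ` (here given as a hypothesis family `β (n)` for `n ≥ 1`, with `ε(β 1) = 1`,
`β 1 ∩ x = 0`, `β (n+1) ∩ x = β n`, `ε(β n) = 0` for `n ≥ 2`).  Assume local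
nilpotence: every `d ∈ D` satisfies `d ∩ xⁿ = 0` for some `n`.  Then `(βₙ)_{n ≥ 1}`
is a free `A`-module basis of `D`. -/
theorem stmt_12 {A D : Type*} [CommRing A] [AddCommGroup D] [Module A D] [Coalgebra A D]
    (hcocomm : ∀ d : D, TensorProduct.comm A D D (Coalgebra.comul d) = Coalgebra.comul d)
    (x : D →ₗ[A] A) (β : ℕ → D)
    (hβε : Coalgebra.counit (R := A) (β 1) = 1) (hβx : stmt12Cap x (β 1) = 0)
    (hinj : Function.Injective fun a : A => a • β 1)
    (hker : ∀ d : D, stmt12Cap x d = 0 ↔ ∃ a : A, d = a • β 1)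
    (hsurj : Function.Surjective (stmt12Cap x))
    (hrec : ∀ n, 1 ≤ n → stmt12Cap x (β (n + 1)) = β n)
    (hε : ∀ n, 2 ≤ n → Coalgebra.counit (R := A) (β n) = 0)
    (hnil : ∀ d : D, ∃ n : ℕ, (stmt12Cap x ^ n) d = 0) :
    ∃ bb : Module.Basis ℕ A D, ∀ n, bb n = β (n + 1) := by
  classical
  set C := stmt12Cap x with hC
  set b : ℕ → D := fun n => β (n + 1) with hb
  have hb0 : C (b 0) = 0 := hβx
  have hbs : ∀ n, C (b (n + 1)) = b n := fun n => hrec (n + 1) (by omega)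
  have hpow : ∀ k n, (C ^ k) (b n) = if k ≤ n then b (n - k) else 0 := by
    intro k
    induction k with
    | zero => intro n; simp
    | succ k ih =>
      intro n
      rw [pow_succ, Module.End.mul_apply]
      cases n with
      | zero =>
        rw [hb0, map_zero]
        simp
      | succ n =>
        rw [hbs n, ih n]
        by_cases hkn : k ≤ n
        · rw [if_pos hkn, if_pos (by omega)]
          congr 1
          omega
        · rw [if_neg hkn, if_neg (by omega)]
  have hinj0 : ∀ a : A, a • β 1 = 0 → a = 0 := by
    intro a ha
    exact hinj (by simpa using ha)
  have hli : LinearIndependent A b := by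
    rw [linearIndependent_iff']
    intro s g
    induction s using Finset.induction_on_max with
    | empty => intro _ i hi; exact absurd hi (Finset.notMem_empty i)
    | insert a s ha ih =>
      intro hsum
      have hga : g a = 0 := by
        have h0 := congrArg (C ^ a) hsum
        rw [map_zero, map_sum] at h0
        have h1 : ∀ i ∈ insert a s, (C ^ a) (g i • b i)
            = if i = a then g a • b 0 else 0 := by
          intro i hi
          rw [map_smul, hpow]
          rcases Finset.mem_insert.1 hi with rfl | hi
          · simp
          · have : i < a := ha i hi
            rw [if_neg (by omega), if_neg (by omega), smul_zero]
        rw [Finset.sum_congr rfl h1, Finset.sum_ite_eq' _ a,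
          if_pos (Finset.mem_insert_self a s)] at h0
        exact hinj0 _ h0
      have hsum' : ∑ i ∈ s, g i • b i = 0 := by
        rw [Finset.sum_insert (fun h => (ha a h).false), hga, zero_smul, zero_add] at hsum
        exact hsum
      intro i hi
      rcases Finset.mem_insert.1 hi with rfl | hi
      · exact hga
      · exact ih hsum' i hi
  have hspan : ∀ d : D, d ∈ Submodule.span A (Set.range b) := by
    set S := Submodule.span A (Set.range b) with hS
    have hmap : S ≤ Submodule.map C S := by
      rw [hS, Submodule.span_le]
      rintro _ ⟨n, rfl⟩
      exact ⟨b (n + 1), Submodule.subset_span ⟨n + 1, rfl⟩, hbs n⟩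
    intro d
    obtain ⟨n, hn⟩ := hnil d
    induction n generalizing d with
    | zero =>
      have hd0 : d = 0 := by simpa using hn
      rw [hd0]; exact S.zero_mem
    | succ n ih =>
      rw [pow_succ, Module.End.mul_apply] at hn
      have hCd : C d ∈ S := ih (C d) hn
      obtain ⟨e, he, hce⟩ := hmap hCd
      obtain ⟨a, haa⟩ := (hker (d - e)).1 (by rw [map_sub, hce, sub_self])
      have : d = a • b 0 + e := by
        have : d - e = a • b 0 := haa
        rw [← this]; abel
      rw [this]
      exact S.add_mem (S.smul_mem a (Submodule.subset_span ⟨0, rfl⟩)) he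
  refine ⟨Module.Basis.mk hli (fun d _ => hspan d), ?_⟩
  intro n
  rw [Module.Basis.mk_apply]
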